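/- Let W be a real Hilbert space, 0 < α ≤ C_M, C_R > 0, M : W →L[ℝ] W self-adjoint with α‖φ‖² ≤ ⟪M φ, φ⟫ ≤ C_M‖φ‖² for all φ ∈ W, R : W →L[ℝ] W with operator norm ‖R‖ ≤ C_R, and V ⊆ W a closed subspace. Let e ∈ W and let w ∈ V be the unique element with ⟪M(e + w), v⟫ = 0 for all v ∈ V. Then there exists a unique g ∈ V such that ⟪M g + R(e + w), v⟫ = 0 for all v ∈ V, and it satisfies ‖g‖_m ≤ 2 (C_R / α) √C_M · ‖e‖, where ‖φ‖_m := √⟪M φ, φ⟫. -/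

import Mathlib

open RealInnerProductSpace

set_option maxHeartbeats 1000000 in
theorem time_dependent_cell_corrector_initial_value_wellposed
    {W : Type*} [NormedAddCommGroup W] [InnerProductSpace ℝ W] [CompleteSpace W]
    (α C_M C_R : ℝ) (hα : 0 < α) (hαC : α ≤ C_M) (hCR : 0 < C_R)
    (M : W →L[ℝ] W) (hMsa : ∀ φ ψ : W, ⟪M φ, ψ⟫ = ⟪φ, M ψ⟫)
    (hMl : ∀ φ : W, α * ‖φ‖ ^ 2 ≤ ⟪M φ, φ⟫)
    (hMu : ∀ φ : W, ⟪M φ, φ⟫ ≤ C_M * ‖φ‖ ^ 2)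
    (R : W →L[ℝ] W) (hR : ‖R‖ ≤ C_R)
    (V : Submodule ℝ W) (hV : IsClosed (V : Set W))
    (e w : W) (hwV : w ∈ V)
    (hw : ∀ v ∈ V, ⟪M (e + w), v⟫ = 0)
    (hwuniq : ∀ w' : W, w' ∈ V → (∀ v ∈ V, ⟪M (e + w'), v⟫ = 0) → w' = w) :
    ∃ g : W, g ∈ V ∧ (∀ v ∈ V, ⟪M g + R (e + w), v⟫ = 0) ∧
      Real.sqrt ⟪M g, g⟫ ≤ 2 * (C_R / α) * Real.sqrt C_M * ‖e‖ ∧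
      ∀ g' : W, g' ∈ V → (∀ v ∈ V, ⟪M g' + R (e + w), v⟫ = 0) → g' = g := by
  haveI : CompleteSpace V := hV.completeSpace_coe
  have hpos : ∀ x : W, 0 ≤ ⟪M x, x⟫ := fun x => le_trans (by positivity) (hMl x)
  -- Cauchy–Schwarz for the M-bilinear form
  have cs : ∀ x y : W, ⟪M x, y⟫ ^ 2 ≤ ⟪M x, x⟫ * ⟪M y, y⟫ := by
    intro x y
    rcases eq_or_ne x 0 with rfl | hx
    · simp
    · have hxn : 0 < ‖x‖ := norm_pos_iff.mpr hx
      have ha : 0 < ⟪M x, x⟫ := by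
        have h1 : 0 < α * ‖x‖ ^ 2 := mul_pos hα (pow_pos hxn 2)
        exact lt_of_lt_of_le h1 (hMl x)
      have hsym : ⟪M y, x⟫ = ⟪M x, y⟫ := by rw [hMsa, real_inner_comm]
      have h0 := hpos (y - (⟪M x, y⟫ / ⟪M x, x⟫) • x)
      simp only [map_sub, map_smul, inner_sub_left, inner_sub_right,
        real_inner_smul_left, real_inner_smul_right, hsym] at h0
      have hne := ha.ne'
      field_simp at h0
      rw [zero_mul] at h0
      nlinarith [h0, ha]
  -- the bilinear form on V
  set B : V →L[ℝ] V →L[ℝ] ℝ :=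
    ((innerSL ℝ).comp M).bilinearComp V.subtypeL V.subtypeL with hBdef
  have hB : ∀ u v : V, B u v = ⟪M (u : W), (v : W)⟫ := fun u v => rfl
  have coercive : IsCoercive B := by
    refine ⟨α, hα, fun u => ?_⟩
    rw [hB]
    have h := hMl (u : W)
    have hnorm : α * ‖u‖ * ‖u‖ = α * ‖(u : W)‖ ^ 2 := by
      rw [show ‖u‖ = ‖(u : W)‖ from rfl]; ring
    linarith [h, hnorm.le, hnorm.ge]
  set f : V := V.orthogonalProjectionOnto (-(R (e + w))) with hfdef
  have hf : ∀ v : V, ⟪(f : W), (v : W)⟫ = ⟪-(R (e + w)), (v : W)⟫ := by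
    intro v
    have h : ⟪-(R (e + w)) - (f : W), (v : W)⟫ = 0 := V.starProjection_inner_eq_zero (-(R (e + w))) (v : W) v.2
    rw [inner_sub_left] at h
    linarith [h]
  set g₀ : V := coercive.continuousLinearEquivOfBilin.symm f with hg0def
  have key : ∀ v : V, ⟪M (g₀ : W), (v : W)⟫ = -⟪R (e + w), (v : W)⟫ := by
    intro v
    have h := coercive.continuousLinearEquivOfBilin_apply g₀ v
    rw [hg0def, ContinuousLinearEquiv.apply_symm_apply] at h
    have hfv : (⟪f, v⟫ : ℝ) = ⟪(f : W), (v : W)⟫ := rfl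
    rw [← hB g₀ v, ← h, hfv, hf v, inner_neg_left]
  clear_value g₀ f B
  clear hg0def hfdef hBdef hf hB coercive
  refine ⟨(g₀ : W), g₀.2, ?_, ?_, ?_⟩
  · intro v hv
    rw [inner_add_left, key ⟨v, hv⟩]
    ring
  · -- the bound
    set x := e + w with hxdef
    -- ⟪M x, x⟫ ≤ C_M ‖e‖²
    have hnx : ⟪M x, x⟫ = ⟪M x, e⟫ := by
      have := hw w hwV
      rw [hxdef, inner_add_right, this, add_zero]
    have hxe : ⟪M x, x⟫ ≤ ⟪M e, e⟫ := by
      have hcs := cs x e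
      rcases eq_or_lt_of_le (hpos x) with h0 | h0
      · nlinarith [hpos e]
      · nlinarith [hcs, h0]
    have hxc : α * ‖x‖ ^ 2 ≤ C_M * ‖e‖ ^ 2 :=
      le_trans (hMl x) (le_trans hxe (hMu e))
    -- ⟪M g, g⟫ bound
    have hMg : ⟪M (g₀ : W), (g₀ : W)⟫ = -⟪R x, (g₀ : W)⟫ := key g₀
    have hRg : ⟪M (g₀ : W), (g₀ : W)⟫ ≤ C_R * ‖x‖ * ‖(g₀ : W)‖ := by
      rw [hMg]
      calc -⟪R x, (g₀ : W)⟫ ≤ ‖R x‖ * ‖(g₀ : W)‖ := by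
            have h1 := abs_real_inner_le_norm (R x) (g₀ : W)
            have h2 := neg_le_abs (⟪R x, (g₀ : W)⟫ : ℝ)
            linarith
        _ ≤ (C_R * ‖x‖) * ‖(g₀ : W)‖ := by
            have h1 : ‖R x‖ ≤ C_R * ‖x‖ :=
              le_trans (R.le_opNorm x) (mul_le_mul_of_nonneg_right hR (norm_nonneg x))
            exact mul_le_mul_of_nonneg_right h1 (norm_nonneg _)
        _ = C_R * ‖x‖ * ‖(g₀ : W)‖ := by ring
    have hαg : α * ‖(g₀ : W)‖ ^ 2 ≤ ⟪M (g₀ : W), (g₀ : W)⟫ := hMl _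
    have hSnn := hpos (g₀ : W)
    have hkey : ⟪M (g₀ : W), (g₀ : W)⟫ ≤ (C_R / α * Real.sqrt C_M * ‖e‖) ^ 2 := by
      have hCM : Real.sqrt C_M ^ 2 = C_M := Real.sq_sqrt (le_trans hα.le hαC)
      have hrhs : (C_R / α * Real.sqrt C_M * ‖e‖) ^ 2
          = C_R ^ 2 * C_M * ‖e‖ ^ 2 / α ^ 2 := by
        rw [mul_pow, mul_pow, hCM, div_pow]; ring
      rw [hrhs, le_div_iff₀ (by positivity : (0:ℝ) < α ^ 2)]
      rcases eq_or_lt_of_le (norm_nonneg ((g₀ : W))) with hG | hG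
      · have hS0 : ⟪M (g₀ : W), (g₀ : W)⟫ ≤ 0 := by
          rw [← hG, mul_zero] at hRg; exact hRg
        nlinarith [hSnn, hS0, mul_pos hα hα,
          mul_nonneg (mul_nonneg (sq_nonneg C_R) (le_trans hα.le hαC)) (sq_nonneg ‖e‖)]
      · have hG1 : α * ‖(g₀ : W)‖ ≤ C_R * ‖x‖ := by
          have h := le_trans hαg hRg
          nlinarith [h, hG]
        have hA := mul_le_mul_of_nonneg_left hG1 (mul_nonneg hCR.le (norm_nonneg x))
        have hA2 := mul_le_mul_of_nonneg_left hA hα.le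
        have hB2 := mul_le_mul_of_nonneg_left hRg (mul_pos hα hα).le
        have hC2 := mul_le_mul_of_nonneg_left hxc (sq_nonneg C_R)
        linarith [hA2, hB2, hC2]
    have hrhsnn : 0 ≤ C_R / α * Real.sqrt C_M * ‖e‖ := by positivity
    calc Real.sqrt ⟪M (g₀ : W), (g₀ : W)⟫
        ≤ Real.sqrt ((C_R / α * Real.sqrt C_M * ‖e‖) ^ 2) := Real.sqrt_le_sqrt hkey
      _ = C_R / α * Real.sqrt C_M * ‖e‖ := Real.sqrt_sq hrhsnn
      _ ≤ 2 * (C_R / α) * Real.sqrt C_M * ‖e‖ := by nlinarith [hrhsnn]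
  · -- uniqueness
    intro g' hg'V hg'
    have hg : ∀ v ∈ V, ⟪M (g' - (g₀ : W)), v⟫ = 0 := by
      intro v hv
      have h1 := hg' v hv
      have h2 : ⟪M (g₀ : W) + R (e + w), v⟫ = 0 := by
        rw [inner_add_left, key ⟨v, hv⟩]; ring
      rw [inner_add_left] at h1 h2
      rw [map_sub, inner_sub_left]
      linarith
    have hmem : g' - (g₀ : W) ∈ V := V.sub_mem hg'V g₀.2
    have h0 := hg _ hmem
    have hle := hMl (g' - (g₀ : W))
    have h3 : α * ‖g' - (g₀ : W)‖ ^ 2 ≤ 0 := le_of_le_of_eq hle h0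
    have h4 : ‖g' - (g₀ : W)‖ ^ 2 = 0 := by
      nlinarith [h3, hα, sq_nonneg ‖g' - (g₀ : W)‖]
    have h5 : ‖g' - (g₀ : W)‖ = 0 := by
      have := sq_eq_zero_iff.mp h4
      exact this
    rw [norm_eq_zero, sub_eq_zero] at h5
    exact h5
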